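/- Let $G$ be a finitely generated amenable group with F\o lner sequence $S = (S_j)$, and let $(c_n)_{n\in\mathbb{N}}$ be a sequence in $\ell^\infty(G)$ such that, setting $\beta_n(j) = |\sum_{s\in S_j} c_n(s)|/|S_j|$ and $\sigma(j) = |\partial_1 S_j|/|S_j|$, we have $\sigma \prec \beta_0$ and $\beta_n \prec \beta_{n+1}$ for all $n$ (where $\alpha \prec \beta$ means $\alpha(j)/\beta(j) \to 0$). Then the classes $[c_n]$ are linearly independent in $H_0^{uf}(G;\mathbb{R})$: no nontrivial finite real linear combination $\sum a_n c_n$ is a boundary in the uniformly finite chain complex. -/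

import Mathlib

/-- The word distance on a group `G` with respect to a generating set `Sg`:
`d(g,h)` is the minimal length of a word in `Sg ∪ Sg⁻¹` representing `g⁻¹h`. -/
noncomputable def wordDist {G : Type*} [Group G] (Sg : Set G) (g h : G) : ℕ :=
  sInf {n | ∃ w : List G, w.length = n ∧ (∀ x ∈ w, x ∈ Sg ∨ x⁻¹ ∈ Sg) ∧ w.prod = g⁻¹ * h}

/-- The closed ball of radius `r` around `g` in the word metric. -/
noncomputable def wball {G : Type*} [Group G] (Sg : Set G) (g : G) (r : ℕ) : Set G :=
  {x | wordDist Sg g x ≤ r}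

/-- The `r`-boundary `∂_r A = {g : 0 < d(g, A) ≤ r}` of a set `A`. -/
noncomputable def rBoundary {G : Type*} [Group G] (Sg : Set G) (r : ℕ) (A : Set G) : Set G :=
  {g | g ∉ A ∧ ∃ a ∈ A, wordDist Sg a g ≤ r}

/-- A Følner sequence: a sequence of nonempty finite subsets whose `r`-boundaries are
asymptotically negligible for every `r > 0`. -/
def IsFolner {G : Type*} [Group G] (Sg : Set G) (S : ℕ → Finset G) : Prop :=
  (∀ j, (S j).Nonempty) ∧ ∀ r : ℕ, 0 < r →
    Filter.Tendsto (fun j => ((rBoundary Sg r (S j : Set G)).ncard : ℝ) / (S j).card)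
      Filter.atTop (nhds 0)

/-- `c : G → ℝ` is a boundary in the degree-zero uniformly finite chain complex: there is
a bounded `1`-chain `b : G² → ℝ`, supported on pairs of uniformly bounded distance, with
`∂₁ b = c`, where `∂₁ b (x) = ∑_y b(y,x) - ∑_y b(x,y)`. -/
noncomputable def IsUFBoundary {G : Type*} [Group G] (Sg : Set G) (c : G → ℝ) : Prop :=
  ∃ b : G × G → ℝ,
    (∃ C : ℝ, ∀ p, |b p| ≤ C) ∧
    (∃ R : ℕ, ∀ p : G × G, R < wordDist Sg p.1 p.2 → b p = 0) ∧
    ∀ x : G, c x = (∑ᶠ y, b (y, x)) - (∑ᶠ y, b (x, y))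

section WD
variable {G : Type*} [Group G] {Sg : Set G}

lemma wordDist_le {g h : G} {w : List G} (hw : ∀ x ∈ w, x ∈ Sg ∨ x⁻¹ ∈ Sg)
    (hp : w.prod = g⁻¹ * h) : wordDist Sg g h ≤ w.length :=
  Nat.sInf_le ⟨w, rfl, hw, hp⟩

lemma exists_word (hgen : Subgroup.closure Sg = ⊤) (z : G) :
    ∃ w : List G, (∀ x ∈ w, x ∈ Sg ∨ x⁻¹ ∈ Sg) ∧ w.prod = z := by
  have hz : z ∈ Subgroup.closure Sg := hgen ▸ Subgroup.mem_top z
  induction hz using Subgroup.closure_induction with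
  | mem x hx => exact ⟨[x], by simpa using Or.inl hx, by simp⟩
  | one => exact ⟨[], by simp, by simp⟩
  | mul x y _ _ hx hy =>
      obtain ⟨w1, h1, p1⟩ := hx; obtain ⟨w2, h2, p2⟩ := hy
      refine ⟨w1 ++ w2, ?_, by simp [p1, p2]⟩
      intro t ht
      rcases List.mem_append.1 ht with h | h
      exacts [h1 t h, h2 t h]
  | inv x _ hx =>
      obtain ⟨w, h1, p1⟩ := hx
      refine ⟨(w.map fun t => t⁻¹).reverse, ?_, by rw [← List.prod_inv_reverse, p1]⟩
      intro t ht
      simp only [List.mem_reverse, List.mem_map] at ht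
      obtain ⟨u, hu, rfl⟩ := ht
      rcases h1 u hu with h | h
      · exact Or.inr (by simpa using h)
      · exact Or.inl h

lemma wordSet_nonempty (hgen : Subgroup.closure Sg = ⊤) (g h : G) :
    {n | ∃ w : List G, w.length = n ∧ (∀ x ∈ w, x ∈ Sg ∨ x⁻¹ ∈ Sg) ∧ w.prod = g⁻¹ * h}.Nonempty := by
  obtain ⟨w, h1, h2⟩ := exists_word hgen (g⁻¹ * h)
  exact ⟨w.length, w, rfl, h1, h2⟩

lemma exists_min_word (hgen : Subgroup.closure Sg = ⊤) (g h : G) :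
    ∃ w : List G, w.length = wordDist Sg g h ∧ (∀ x ∈ w, x ∈ Sg ∨ x⁻¹ ∈ Sg) ∧ w.prod = g⁻¹ * h :=
  Nat.sInf_mem (wordSet_nonempty hgen g h)

lemma wordDist_symm (hgen : Subgroup.closure Sg = ⊤) (g h : G) :
    wordDist Sg g h = wordDist Sg h g := by
  have key : ∀ g h : G, wordDist Sg g h ≤ wordDist Sg h g := by
    intro g h
    obtain ⟨w, hlen, hw, hp⟩ := exists_min_word hgen h g
    have : wordDist Sg g h ≤ ((w.map fun t => t⁻¹).reverse).length := by
      refine wordDist_le ?_ ?_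
      · intro t ht
        simp only [List.mem_reverse, List.mem_map] at ht
        obtain ⟨u, hu, rfl⟩ := ht
        rcases hw u hu with h' | h'
        · exact Or.inr (by simpa using h')
        · exact Or.inl h'
      · rw [← List.prod_inv_reverse, hp]; group
    simpa [List.length_reverse, List.length_map, hlen] using this
  exact le_antisymm (key g h) (key h g)

lemma wordDist_one_eq (g h : G) : wordDist Sg g h = wordDist Sg 1 (g⁻¹ * h) := by
  simp [wordDist]

lemma wordDist_triangle (hgen : Subgroup.closure Sg = ⊤) (g h k : G) :
    wordDist Sg g k ≤ wordDist Sg g h + wordDist Sg h k := by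
  obtain ⟨w1, l1, h1, p1⟩ := exists_min_word hgen g h
  obtain ⟨w2, l2, h2, p2⟩ := exists_min_word hgen h k
  have := wordDist_le (g := g) (h := k) (w := w1 ++ w2)
    (by intro t ht; rcases List.mem_append.1 ht with h' | h'; exacts [h1 t h', h2 t h'])
    (by rw [List.prod_append, p1, p2]; group)
  simpa [l1, l2] using this

end WD

section Ball
variable {G : Type*} [Group G] {Sg : Set G}

lemma wordDist_one_mul (g x : G) : wordDist Sg g x = wordDist Sg 1 (g⁻¹ * x) := by
  simp [wordDist]

lemma wball_eq_image (g : G) (r : ℕ) :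
    wball Sg g r = (fun y => g * y) '' wball Sg 1 r := by
  ext x
  constructor
  · intro hx
    exact ⟨g⁻¹ * x, by simpa [wball, ← wordDist_one_mul] using hx, by group⟩
  · rintro ⟨y, hy, rfl⟩
    simpa [wball, wordDist_one_mul g (g * y)] using hy

lemma wball_zero (hgen : Subgroup.closure Sg = ⊤) (g : G) : wball Sg g 0 ⊆ {g} := by
  intro x hx
  obtain ⟨w, hlen, hw, hp⟩ := exists_min_word hgen g x
  have hb : wordDist Sg g x ≤ 0 := hx
  have : w = [] := List.length_eq_zero_iff.1 (by omega)
  rw [this] at hp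
  have h1 : g⁻¹ * x = 1 := by simpa using hp.symm
  have : g = x := inv_mul_eq_one.1 h1
  simp [this.symm]

lemma wball_succ_subset (hgen : Subgroup.closure Sg = ⊤) (g : G) (r : ℕ) :
    wball Sg g (r + 1) ⊆ wball Sg g r ∪ ⋃ s ∈ (Sg ∪ Sg⁻¹), (fun y => y * s) '' wball Sg g r := by
  intro x hx
  obtain ⟨w, hlen, hw, hp⟩ := exists_min_word hgen g x
  have hd : wordDist Sg g x ≤ r + 1 := hx
  by_cases h : wordDist Sg g x ≤ r
  · exact Or.inl h
  · have hlw : w.length = r + 1 := by omega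
    have hne : w ≠ [] := by
      intro h'; rw [h'] at hlw; simp at hlw
    set s := w.getLast hne with hs
    have hsplit : w.dropLast ++ [s] = w := List.dropLast_append_getLast hne
    have hpmem : g * w.dropLast.prod ∈ wball Sg g r := by
      have : wordDist Sg g (g * w.dropLast.prod) ≤ w.dropLast.length := by
        refine wordDist_le ?_ (by group)
        intro t ht
        exact hw t (List.mem_of_mem_dropLast ht)
      have hld : w.dropLast.length = r := by
        rw [List.length_dropLast, hlw]; omega
      exact le_trans this (le_of_eq hld)
    have hsE : s ∈ Sg ∪ Sg⁻¹ := by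
      rcases hw s (by rw [← hsplit]; simp) with h' | h'
      · exact Or.inl h'
      · exact Or.inr h'
    refine Or.inr ?_
    refine Set.mem_biUnion hsE ⟨g * w.dropLast.prod, hpmem, ?_⟩
    have : w.prod = w.dropLast.prod * s := by
      conv_lhs => rw [← hsplit]
      simp
    have hx' : x = g * w.prod := by
      rw [hp]; group
    rw [hx', this]; group

lemma wball_finite (hgen : Subgroup.closure Sg = ⊤) (hfin : Sg.Finite) (g : G) (r : ℕ) :
    (wball Sg g r).Finite := by
  induction r with
  | zero => exact Set.Finite.subset (Set.finite_singleton g) (wball_zero hgen g)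
  | succ r ih =>
      refine Set.Finite.subset ?_ (wball_succ_subset hgen g r)
      refine Set.Finite.union ih ?_
      refine Set.Finite.biUnion (Set.Finite.union hfin (Set.Finite.inv hfin)) ?_
      intro s _
      exact Set.Finite.image _ ih

end Ball

section Exit
variable {G : Type*} [Group G] {Sg : Set G}

lemma exists_exit (hgen : Subgroup.closure Sg = ⊤) (F : Set G) :
    ∀ (w : List G) (x y : G), x ∈ F → y ∉ F → (∀ t ∈ w, t ∈ Sg ∨ t⁻¹ ∈ Sg) →
    w.prod = x⁻¹ * y →
    ∃ p, p ∈ rBoundary Sg 1 F ∧ wordDist Sg p x ≤ w.length ∧ wordDist Sg p y ≤ w.length := by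
  intro w
  induction w with
  | nil =>
      intro x y hx hy _ hp
      exfalso
      have : x = y := by
        have : (1:G) = x⁻¹ * y := by simpa using hp
        exact inv_mul_eq_one.1 this.symm
      exact hy (this ▸ hx)
  | cons s t ih =>
      intro x y hx hy hw hp
      have hs := hw s (by simp)
      have hts : ∀ u ∈ t, u ∈ Sg ∨ u⁻¹ ∈ Sg := fun u hu => hw u (by simp [hu])
      have hpt : t.prod = (x * s)⁻¹ * y := by
        have h1 : s * t.prod = x⁻¹ * y := by simpa using hp
        calc t.prod = s⁻¹ * (s * t.prod) := by group
          _ = s⁻¹ * (x⁻¹ * y) := by rw [h1]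
          _ = (x * s)⁻¹ * y := by group
      have hsinvword : ∀ z : G, wordDist Sg (z * s) z ≤ 1 := by
        intro z
        have := wordDist_le (g := z * s) (h := z) (w := [s⁻¹])
          (by intro u hu; simp only [List.mem_singleton] at hu; subst hu
              rcases hs with h' | h'
              · exact Or.inr (by simpa using h')
              · exact Or.inl h')
          (by simp)
        simpa using this
      by_cases hx' : x * s ∈ F
      · obtain ⟨p, hpb, hpx, hpy⟩ := ih (x * s) y hx' hy hts hpt
        refine ⟨p, hpb, ?_, le_trans hpy (by simp)⟩
        calc wordDist Sg p x ≤ wordDist Sg p (x * s) + wordDist Sg (x * s) x :=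
              wordDist_triangle hgen _ _ _
          _ ≤ t.length + 1 := add_le_add hpx (hsinvword x)
          _ = (s :: t).length := by simp
      · refine ⟨x * s, ⟨hx', x, hx, ?_⟩, ?_, ?_⟩
        · have := wordDist_le (g := x) (h := x * s) (w := [s])
            (by intro u hu; simp only [List.mem_singleton] at hu; subst hu; exact hs)
            (by simp)
          simpa using this
        · exact le_trans (hsinvword x) (by simp)
        · have := wordDist_le (g := x * s) (h := y) (w := t) hts hpt
          exact le_trans this (by simp)

lemma rBoundary_finite (hgen : Subgroup.closure Sg = ⊤) (hfin : Sg.Finite) (F : Finset G) :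
    (rBoundary Sg 1 (F : Set G)).Finite := by
  refine Set.Finite.subset (Set.Finite.biUnion F.finite_toSet
    (fun a _ => wball_finite hgen hfin a 1)) ?_
  rintro g ⟨hg, a, ha, hd⟩
  exact Set.mem_biUnion ha hd

lemma key_estimate (hgen : Subgroup.closure Sg = ⊤) (hfin : Sg.Finite)
    (c : G → ℝ) (hb : ∃ b : G × G → ℝ,
      (∃ C : ℝ, ∀ p, |b p| ≤ C) ∧
      (∃ R : ℕ, ∀ p : G × G, R < wordDist Sg p.1 p.2 → b p = 0) ∧
      ∀ x : G, c x = (∑ᶠ y, b (y, x)) - (∑ᶠ y, b (x, y))) :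
    ∃ M : ℝ, 0 ≤ M ∧ ∀ F : Finset G,
      |∑ x ∈ F, c x| ≤ M * (rBoundary Sg 1 (F : Set G)).ncard := by
  classical
  obtain ⟨b, ⟨C, hC⟩, ⟨R, hR⟩, hc⟩ := hb
  have hC0 : 0 ≤ C := le_trans (abs_nonneg _) (hC (1, 1))
  set K : Finset G := (wball_finite hgen hfin 1 R).toFinset with hK
  refine ⟨2 * C * (K.card : ℝ) ^ 2, by positivity, ?_⟩
  intro F
  set D : Finset G := (rBoundary_finite hgen hfin F).toFinset with hD
  have hDcard : (D.card : ℝ) = (rBoundary Sg 1 (F : Set G)).ncard := by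
    rw [hD, Set.ncard_eq_toFinset_card _ (rBoundary_finite hgen hfin F)]
  -- balls
  have memball : ∀ x y : G, wordDist Sg x y ≤ R → y ∈ K.image (x * ·) := by
    intro x y hxy
    refine Finset.mem_image.2 ⟨x⁻¹ * y, ?_, by group⟩
    rw [hK, Set.Finite.mem_toFinset]
    show wordDist Sg 1 (x⁻¹ * y) ≤ R
    rw [← wordDist_one_mul]; exact hxy
  set U : Finset G := F ∪ F.biUnion (fun x => K.image (x * ·)) with hU
  have hFU : F ⊆ U := Finset.subset_union_left
  have step1 : ∀ x ∈ F, c x = ∑ y ∈ U, (b (y, x) - b (x, y)) := by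
    intro x hxF
    have hsub : (K.image (x * ·)) ⊆ U := by
      refine Finset.Subset.trans ?_ Finset.subset_union_right
      intro y hy; exact Finset.mem_biUnion.2 ⟨x, hxF, hy⟩
    have h1 : (∑ᶠ y, b (y, x)) = ∑ y ∈ U, b (y, x) := by
      refine finsum_eq_sum_of_support_subset _ ?_
      intro y hy
      have hd : wordDist Sg y x ≤ R := by
        by_contra hcon
        exact hy (hR (y, x) (by simpa using Nat.lt_of_not_le hcon))
      have : wordDist Sg x y ≤ R := by rwa [wordDist_symm hgen]
      exact hsub (memball x y this)
    have h2 : (∑ᶠ y, b (x, y)) = ∑ y ∈ U, b (x, y) := by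
      refine finsum_eq_sum_of_support_subset _ ?_
      intro y hy
      have hd : wordDist Sg x y ≤ R := by
        by_contra hcon
        exact hy (hR (x, y) (by simpa using Nat.lt_of_not_le hcon))
      exact hsub (memball x y hd)
    rw [hc x, h1, h2, Finset.sum_sub_distrib]
  have step2 : ∑ x ∈ F, c x = ∑ x ∈ F, ∑ y ∈ U \ F, (b (y, x) - b (x, y)) := by
    rw [Finset.sum_congr rfl step1]
    have hsplit : ∀ x : G, ∑ y ∈ U, (b (y, x) - b (x, y)) =
        ∑ y ∈ U \ F, (b (y, x) - b (x, y)) + ∑ y ∈ F, (b (y, x) - b (x, y)) :=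
      fun x => (Finset.sum_sdiff hFU).symm
    rw [Finset.sum_congr rfl (fun x _ => hsplit x), Finset.sum_add_distrib]
    have hzero : ∑ x ∈ F, ∑ y ∈ F, (b (y, x) - b (x, y)) = 0 := by
      simp only [Finset.sum_sub_distrib]
      rw [Finset.sum_comm]
      rw [sub_eq_zero]
    rw [hzero, add_zero]
  -- pass to pairs
  set T : Finset (G × G) :=
    (F ×ˢ (U \ F)).filter (fun p => wordDist Sg p.1 p.2 ≤ R) with hT
  have step3 : ∑ x ∈ F, c x = ∑ p ∈ T, (b (p.2, p.1) - b (p.1, p.2)) := by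
    rw [step2, ← Finset.sum_product']
    refine (Finset.sum_filter_of_ne ?_).symm
    rintro ⟨x, y⟩ _ hne
    by_contra hcon
    have hgt : R < wordDist Sg x y := Nat.lt_of_not_le hcon
    have h1 : b (x, y) = 0 := hR (x, y) hgt
    have h2 : b (y, x) = 0 := hR (y, x) (by rwa [wordDist_symm hgen])
    simp [h1, h2] at hne
  -- cover T
  have step4 : T ⊆ D.biUnion (fun p => (K.image (p * ·)) ×ˢ (K.image (p * ·))) := by
    rintro ⟨x, y⟩ hxy
    rw [hT, Finset.mem_filter, Finset.mem_product] at hxy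
    obtain ⟨⟨hxF, hyUF⟩, hd⟩ := hxy
    have hyF : y ∉ F := (Finset.mem_sdiff.1 hyUF).2
    obtain ⟨w, hlen, hw, hp⟩ := exists_min_word hgen x y
    obtain ⟨p, hpb, hpx, hpy⟩ := exists_exit hgen (F : Set G) w x y hxF
      (by simpa using hyF) hw hp
    have hpD : p ∈ D := by rw [hD, Set.Finite.mem_toFinset]; exact hpb
    have hwR : w.length ≤ R := hlen ▸ hd
    refine Finset.mem_biUnion.2 ⟨p, hpD, Finset.mem_product.2 ⟨?_, ?_⟩⟩
    · exact memball p x (le_trans hpx hwR)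
    · exact memball p y (le_trans hpy hwR)
  have hTcard : (T.card : ℝ) ≤ (D.card : ℝ) * (K.card : ℝ) ^ 2 := by
    have h1 : T.card ≤ D.card * (K.card * K.card) := by
      refine le_trans (Finset.card_le_card step4) ?_
      refine le_trans (Finset.card_biUnion_le) ?_
      refine le_trans (Finset.sum_le_sum (fun p _ => ?_)) (by rw [Finset.sum_const, smul_eq_mul])
      · exact le_trans (le_of_eq (Finset.card_product _ _))
          (Nat.mul_le_mul (Finset.card_image_le) (Finset.card_image_le))
    calc (T.card : ℝ) ≤ (D.card * (K.card * K.card) : ℕ) := by exact_mod_cast h1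
      _ = (D.card : ℝ) * (K.card : ℝ) ^ 2 := by push_cast; ring
  calc |∑ x ∈ F, c x| = |∑ p ∈ T, (b (p.2, p.1) - b (p.1, p.2))| := by rw [step3]
    _ ≤ ∑ p ∈ T, |b (p.2, p.1) - b (p.1, p.2)| := Finset.abs_sum_le_sum_abs _ _
    _ ≤ ∑ p ∈ T, 2 * C := Finset.sum_le_sum (fun p _ => by
          calc |b (p.2, p.1) - b (p.1, p.2)| ≤ |b (p.2, p.1)| + |b (p.1, p.2)| := abs_sub _ _
            _ ≤ C + C := add_le_add (hC _) (hC _)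
            _ = 2 * C := by ring)
    _ = (T.card : ℝ) * (2 * C) := by rw [Finset.sum_const, nsmul_eq_mul]
    _ ≤ ((D.card : ℝ) * (K.card : ℝ) ^ 2) * (2 * C) := by
          apply mul_le_mul_of_nonneg_right hTcard (by positivity)
    _ = 2 * C * (K.card : ℝ) ^ 2 * (rBoundary Sg 1 (F : Set G)).ncard := by
          rw [← hDcard]; ring

end Exit

section Main
open Filter

lemma ratio_lt (β : ℕ → ℕ → ℝ) (hpos : ∀ n, ∀ᶠ j in atTop, 0 < β n j)
    (hmono : ∀ n, Tendsto (fun j => β n j / β (n + 1) j) atTop (nhds 0)) :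
    ∀ i m : ℕ, i < m → Tendsto (fun j => β i j / β m j) atTop (nhds 0) := by
  intro i m him
  induction m, him using Nat.le_induction with
  | base => exact hmono i
  | succ m hm ih =>
      have heq : (fun j => (β i j / β m j) * (β m j / β (m + 1) j)) =ᶠ[atTop]
          (fun j => β i j / β (m + 1) j) := by
        filter_upwards [hpos m] with j hj
        rw [div_mul_div_comm, mul_comm (β i j) (β m j), mul_div_mul_left _ _ (ne_of_gt hj)]
      have := (ih.mul (hmono m)).congr' heq
      simpa using this

lemma sigma_ratio (β : ℕ → ℕ → ℝ) (σ : ℕ → ℝ)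
    (hpos : ∀ n, ∀ᶠ j in atTop, 0 < β n j)
    (h0 : Tendsto (fun j => σ j / β 0 j) atTop (nhds 0))
    (hmono : ∀ n, Tendsto (fun j => β n j / β (n + 1) j) atTop (nhds 0)) :
    ∀ m : ℕ, Tendsto (fun j => σ j / β m j) atTop (nhds 0) := by
  intro m
  rcases Nat.eq_zero_or_pos m with rfl | hm
  · exact h0
  · have hrat := ratio_lt β hpos hmono 0 m hm
    have heq : (fun j => (σ j / β 0 j) * (β 0 j / β m j)) =ᶠ[atTop]
        (fun j => σ j / β m j) := by
      filter_upwards [hpos 0] with j hj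
      rw [div_mul_div_comm, mul_comm (σ j) (β 0 j), mul_div_mul_left _ _ (ne_of_gt hj)]
    have := (h0.mul hrat).congr' heq
    simpa using this

end Main

/-- Let `G` be finitely generated amenable with Følner sequence `S`, and
`(c_n)` a sequence of bounded functions with `σ ≺ β₀` and `β_n ≺ β_{n+1}` (where
`β_n(j) = |∑_{s∈S_j} c_n(s)|/|S_j|` and `σ(j) = |∂₁S_j|/|S_j|`). Then the classes
`[c_n]` are linearly independent in `H₀^{uf}(G;ℝ)`: no nontrivial finite real linear
combination of the `c_n` is a uniformly finite boundary. -/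
theorem linear_independence_of_growth {G : Type*} [Group G]
    (Sg : Finset G) (hgen : Subgroup.closure (Sg : Set G) = ⊤)
    (S : ℕ → Finset G) (hS : IsFolner (Sg : Set G) S)
    (c : ℕ → G → ℝ) (hc : ∀ n, ∃ C : ℝ, ∀ g, |c n g| ≤ C)
    (β : ℕ → ℕ → ℝ) (hβ : ∀ n j, β n j = |∑ s ∈ S j, c n s| / (S j).card)
    (σ : ℕ → ℝ)
    (hσ : ∀ j, σ j = ((rBoundary (Sg : Set G) 1 (S j : Set G)).ncard : ℝ) / (S j).card)
    (hpos : ∀ n, ∀ᶠ j in Filter.atTop, 0 < β n j)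
    (h0 : Filter.Tendsto (fun j => σ j / β 0 j) Filter.atTop (nhds 0))
    (hmono : ∀ n, Filter.Tendsto (fun j => β n j / β (n + 1) j) Filter.atTop (nhds 0)) :
    ∀ (N : ℕ) (a : Fin N → ℝ),
      IsUFBoundary (Sg : Set G) (fun g => ∑ i, a i * c i g) → ∀ i, a i = 0 := by
  classical
  intro N a hbdry
  by_contra hcon
  push_neg at hcon
  obtain ⟨i0, hi0⟩ := hcon
  set s : Finset (Fin N) := Finset.univ.filter (fun i => a i ≠ 0) with hs
  have hsne : s.Nonempty := ⟨i0, by simp [hs, hi0]⟩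
  set m : Fin N := s.max' hsne with hm
  have hms : a m ≠ 0 := by
    exact (Finset.mem_filter.1 (s.max'_mem hsne)).2
  have hmax : ∀ i ∈ s, i ≤ m := fun i hi => s.le_max' i hi
  -- the boundary estimate
  obtain ⟨M, hM0, hM⟩ := key_estimate hgen Sg.finite_toSet _ hbdry
  -- card positivity
  have hcard : ∀ j, (0 : ℝ) < (S j).card := by
    intro j
    exact_mod_cast Finset.card_pos.2 (hS.1 j)
  -- A i j
  set A : Fin N → ℕ → ℝ := fun i j => ∑ g ∈ S j, c i g with hA
  have hsum : ∀ j, ∑ g ∈ S j, (∑ i, a i * c i g) = ∑ i ∈ s, a i * A i j := by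
    intro j
    rw [Finset.sum_comm]
    rw [← Finset.sum_filter_of_ne (s := Finset.univ)
      (p := fun i => a i ≠ 0) (f := fun i => ∑ g ∈ S j, a i * c i g)]
    · refine Finset.sum_congr rfl ?_
      intro i _
      rw [hA, Finset.mul_sum]
    · intro i _ hne h0'
      exact hne (by simp [h0'])
  have hAabs : ∀ i j, |A i j| = β (i : ℕ) j * (S j).card := by
    intro i j
    rw [hβ, hA, div_mul_cancel₀]
    exact ne_of_gt (hcard j)
  -- eventual inequality
  have hineq : ∀ᶠ j in Filter.atTop,
      |a m| ≤ M * (σ j / β (m : ℕ) j) +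
        ∑ i ∈ s.erase m, |a i| * (β (i : ℕ) j / β (m : ℕ) j) := by
    filter_upwards [hpos (m : ℕ)] with j hj
    have hβc : 0 < β (m : ℕ) j * (S j).card := mul_pos hj (hcard j)
    rw [← mul_le_mul_iff_of_pos_right hβc]
    have lhs_eq : |a m| * (β (m : ℕ) j * (S j).card) = |a m * A m j| := by
      rw [abs_mul, hAabs]
    have hsplit : a m * A m j =
        (∑ i ∈ s, a i * A i j) - ∑ i ∈ s.erase m, a i * A i j := by
      rw [eq_sub_iff_add_eq, add_comm, Finset.sum_erase_add]
      exact s.max'_mem hsne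
    have est1 : |∑ i ∈ s, a i * A i j| ≤ M * σ j * (S j).card := by
      rw [← hsum]
      refine le_trans (hM (S j)) ?_
      rw [hσ, mul_assoc, div_mul_cancel₀]
      exact ne_of_gt (hcard j)
    have est2 : |∑ i ∈ s.erase m, a i * A i j| ≤
        ∑ i ∈ s.erase m, |a i| * (β (i : ℕ) j * (S j).card) := by
      refine le_trans (Finset.abs_sum_le_sum_abs _ _) ?_
      refine Finset.sum_le_sum (fun i _ => ?_)
      rw [abs_mul, hAabs]
    calc |a m| * (β (m : ℕ) j * (S j).card) = |a m * A m j| := lhs_eq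
      _ ≤ |∑ i ∈ s, a i * A i j| + |∑ i ∈ s.erase m, a i * A i j| := by
          rw [hsplit]; exact abs_sub _ _
      _ ≤ M * σ j * (S j).card +
            ∑ i ∈ s.erase m, |a i| * (β (i : ℕ) j * (S j).card) := add_le_add est1 est2
      _ = (M * (σ j / β (m : ℕ) j) +
            ∑ i ∈ s.erase m, |a i| * (β (i : ℕ) j / β (m : ℕ) j)) *
            (β (m : ℕ) j * (S j).card) := by
          rw [add_mul, Finset.sum_mul]
          congr 1
          · rw [show M * (σ j / β (m : ℕ) j) * (β (m : ℕ) j * ((S j).card : ℝ)) = M * (σ j / β (m : ℕ) j * β (m : ℕ) j) * ((S j).card : ℝ) by ring, div_mul_cancel₀ _ (ne_of_gt hj)]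
          · refine Finset.sum_congr rfl (fun i _ => ?_)
            rw [show |a i| * (β (i : ℕ) j / β (m : ℕ) j) * (β (m : ℕ) j * ((S j).card : ℝ)) = |a i| * (β (i : ℕ) j / β (m : ℕ) j * β (m : ℕ) j) * ((S j).card : ℝ) by ring, div_mul_cancel₀ _ (ne_of_gt hj)]
            ring
  -- RHS tends to zero
  have hrhs : Filter.Tendsto (fun j => M * (σ j / β (m : ℕ) j) +
      ∑ i ∈ s.erase m, |a i| * (β (i : ℕ) j / β (m : ℕ) j)) Filter.atTop (nhds 0) := by
    have h1 : Filter.Tendsto (fun j => M * (σ j / β (m : ℕ) j)) Filter.atTop (nhds 0) := by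
      simpa using (sigma_ratio β σ hpos h0 hmono (m : ℕ)).const_mul M
    have h2 : Filter.Tendsto
        (fun j => ∑ i ∈ s.erase m, |a i| * (β (i : ℕ) j / β (m : ℕ) j))
        Filter.atTop (nhds 0) := by
      have : Filter.Tendsto
          (fun j => ∑ i ∈ s.erase m, |a i| * (β (i : ℕ) j / β (m : ℕ) j))
          Filter.atTop (nhds (∑ i ∈ s.erase m, 0)) := by
        refine tendsto_finset_sum _ (fun i hi => ?_)
        have him : (i : ℕ) < (m : ℕ) := by
          have h1 := hmax i (Finset.mem_of_mem_erase hi)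
          have h2 := Finset.ne_of_mem_erase hi
          exact Fin.lt_iff_val_lt_val.1 (lt_of_le_of_ne h1 h2)
        simpa using (ratio_lt β hpos hmono (i : ℕ) (m : ℕ) him).const_mul |a i|
      simpa using this
    simpa using h1.add h2
  have : |a m| ≤ 0 := ge_of_tendsto hrhs hineq
  exact hms (abs_eq_zero.1 (le_antisymm this (abs_nonneg _)))
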